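/- If for every finitely generated right ideal I of R the character module I⁺ is either injective or pi-indigent, then either R is left absolutely pure or the weak global dimension of R is at most 1. -/

import Mathlib

universe u

open LinearMap MulOpposite

/-! Character module -/

/-- The character group `M⁺ = Hom_ℤ(M, ℚ/ℤ)`. -/
abbrev CharMod (M : Type u) [AddCommGroup M] : Type u := M →+ AddCircle (1 : ℚ)

/-- If `M` is a left `S`-module, then `M⁺` is a right `S`-module via `(f • r) m = f (r • m)`. -/
instance CharMod.moduleRight (S : Type u) [Ring S] (M : Type u) [AddCommGroup M]
    [Module S M] : Module Sᵐᵒᵖ (CharMod M) where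
  smul r f := f.comp (DistribMulAction.toAddMonoidHom M (unop r))
  one_smul f := by
    apply AddMonoidHom.ext; intro m
    show f ((unop (1 : Sᵐᵒᵖ)) • m) = f m
    simp
  mul_smul r s f := by
    apply AddMonoidHom.ext; intro m
    show f ((unop (r * s)) • m) = f ((unop s) • ((unop r) • m))
    simp [mul_smul]
  smul_zero r := by apply AddMonoidHom.ext; intro m; rfl
  smul_add r f g := by apply AddMonoidHom.ext; intro m; rfl
  add_smul r s f := by
    apply AddMonoidHom.ext; intro m
    show f ((unop (r + s)) • m) = f ((unop r) • m) + f ((unop s) • m)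
    rw [unop_add, add_smul, map_add]
  zero_smul f := by
    apply AddMonoidHom.ext; intro m
    show f ((unop (0 : Sᵐᵒᵖ)) • m) = 0
    simp

/-- If `M` is a right `S`-module, then `M⁺` is a left `S`-module via `(r • f) m = f (m • r)`. -/
instance CharMod.moduleLeft (S : Type u) [Ring S] (M : Type u) [AddCommGroup M]
    [Module Sᵐᵒᵖ M] : Module S (CharMod M) where
  smul r f := f.comp (DistribMulAction.toAddMonoidHom M (op r))
  one_smul f := by
    apply AddMonoidHom.ext; intro m
    show f ((op (1 : S)) • m) = f m
    simp
  mul_smul r s f := by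
    apply AddMonoidHom.ext; intro m
    show f ((op (r * s)) • m) = f ((op s) • ((op r) • m))
    rw [← mul_smul, ← op_mul]
  smul_zero r := by apply AddMonoidHom.ext; intro m; rfl
  smul_add r f g := by apply AddMonoidHom.ext; intro m; rfl
  add_smul r s f := by
    apply AddMonoidHom.ext; intro m
    show f ((op (r + s)) • m) = f ((op r) • m) + f ((op s) • m)
    rw [op_add, add_smul, map_add]
  zero_smul f := by
    apply AddMonoidHom.ext; intro m
    show f ((op (0 : S)) • m) = 0
    simp

/-! Tensor product of a right module and a left module over a (possibly noncommutative) ring -/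

section Tensor

variable (S : Type u) [Ring S]

/-- The bilinearity relations defining `M ⊗_S N` as a quotient of `M ⊗_ℤ N`. -/
def tensorRel (M N : Type u) [AddCommGroup M] [Module Sᵐᵒᵖ M] [AddCommGroup N] [Module S N] :
    Submodule ℤ (TensorProduct ℤ M N) :=
  Submodule.span ℤ {x | ∃ (m : M) (r : S) (n : N),
    x = (op r • m) ⊗ₜ[ℤ] n - m ⊗ₜ[ℤ] (r • n)}

/-- `M ⊗_S N` for a right `S`-module `M` and a left `S`-module `N`. -/
def RTensor (M N : Type u) [AddCommGroup M] [Module Sᵐᵒᵖ M] [AddCommGroup N] [Module S N] :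
    Type u := TensorProduct ℤ M N ⧸ tensorRel S M N

noncomputable instance (M N : Type u) [AddCommGroup M] [Module Sᵐᵒᵖ M] [AddCommGroup N] [Module S N] :
    AddCommGroup (RTensor S M N) :=
  inferInstanceAs (AddCommGroup (TensorProduct ℤ M N ⧸ tensorRel S M N))

/-- Functoriality of `M ⊗_S -` in the left-module variable. -/
noncomputable def rTensorMap (M : Type u) [AddCommGroup M] [Module Sᵐᵒᵖ M] {N B : Type u}
    [AddCommGroup N] [Module S N] [AddCommGroup B] [Module S B] (g : N →ₗ[S] B) :
    RTensor S M N →ₗ[ℤ] RTensor S M B :=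
  Submodule.mapQ _ _ (TensorProduct.map LinearMap.id g.toAddMonoidHom.toIntLinearMap)
    (by
      rw [tensorRel, Submodule.span_le]
      rintro x ⟨m, r, n, rfl⟩
      show TensorProduct.map LinearMap.id g.toAddMonoidHom.toIntLinearMap
        ((op r • m) ⊗ₜ[ℤ] n - m ⊗ₜ[ℤ] (r • n)) ∈ tensorRel S M B
      rw [map_sub, TensorProduct.map_tmul, TensorProduct.map_tmul]
      simp only [LinearMap.id_apply, AddMonoidHom.coe_toIntLinearMap, LinearMap.toAddMonoidHom_coe]
      rw [map_smul]
      exact Submodule.subset_span ⟨m, r, g n, rfl⟩)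

/-- Functoriality of `- ⊗_S N` in the right-module variable. -/
noncomputable def lTensorMap {M B : Type u} [AddCommGroup M] [Module Sᵐᵒᵖ M] [AddCommGroup B]
    [Module Sᵐᵒᵖ B] (h : M →ₗ[Sᵐᵒᵖ] B) (N : Type u) [AddCommGroup N] [Module S N] :
    RTensor S M N →ₗ[ℤ] RTensor S B N :=
  Submodule.mapQ _ _ (TensorProduct.map h.toAddMonoidHom.toIntLinearMap LinearMap.id)
    (by
      rw [tensorRel, Submodule.span_le]
      rintro x ⟨m, r, n, rfl⟩
      show TensorProduct.map h.toAddMonoidHom.toIntLinearMap LinearMap.id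
        ((op r • m) ⊗ₜ[ℤ] n - m ⊗ₜ[ℤ] (r • n)) ∈ tensorRel S B N
      rw [map_sub, TensorProduct.map_tmul, TensorProduct.map_tmul]
      simp only [LinearMap.id_apply, AddMonoidHom.coe_toIntLinearMap, LinearMap.toAddMonoidHom_coe]
      rw [map_smul]
      exact Submodule.subset_span ⟨h m, r, n, rfl⟩)

end Tensor

/-! Basic relative homological notions -/

section Defs

variable (S : Type u) [Ring S]

/-- `M` is `N`-subinjective: every map `N → M` extends along every embedding of `N`. -/
def Subinjective (N M : Type u) [AddCommGroup N] [Module S N] [AddCommGroup M]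
    [Module S M] : Prop :=
  ∀ (K : Type u) [AddCommGroup K] [Module S K] (i : N →ₗ[S] K), Function.Injective i →
    ∀ f : N →ₗ[S] M, ∃ h : K →ₗ[S] M, h ∘ₗ i = f

/-- `M` is an injective module. -/
def InjMod (M : Type u) [AddCommGroup M] [Module S M] : Prop :=
  ∀ (N : Type u) [AddCommGroup N] [Module S N], Subinjective S N M

/-- `M` is `N`-subprojective. -/
def Subprojective (M N : Type u) [AddCommGroup M] [Module S M] [AddCommGroup N]
    [Module S N] : Prop :=
  ∀ (B : Type u) [AddCommGroup B] [Module S B] (g : B →ₗ[S] N), Function.Surjective g →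
    ∀ f : M →ₗ[S] N, ∃ h : M →ₗ[S] B, g ∘ₗ h = f

/-- A monomorphism of left `S`-modules is pure if it stays injective after
tensoring with any right `S`-module. -/
def IsPureMono {A B : Type u} [AddCommGroup A] [Module S A] [AddCommGroup B] [Module S B]
    (i : A →ₗ[S] B) : Prop :=
  Function.Injective i ∧
    ∀ (M : Type u) [AddCommGroup M] [Module Sᵐᵒᵖ M], Function.Injective (rTensorMap S M i)

/-- `N` is absolutely pure (fp-injective): every embedding of `N` is pure. -/
def AbsPure (N : Type u) [AddCommGroup N] [Module S N] : Prop :=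
  ∀ (K : Type u) [AddCommGroup K] [Module S K] (i : N →ₗ[S] K), Function.Injective i →
    IsPureMono S i

/-- `N` is absolutely `M`-pure, for a right module `M`. -/
def AbsMPure (M : Type u) [AddCommGroup M] [Module Sᵐᵒᵖ M] (N : Type u) [AddCommGroup N]
    [Module S N] : Prop :=
  ∀ (B : Type u) [AddCommGroup B] [Module S B] (i : N →ₗ[S] B), Function.Injective i →
    Function.Injective (rTensorMap S M i)

/-- `M` is pure-injective: maps into `M` extend along pure monomorphisms. -/
def PureInjective (M : Type u) [AddCommGroup M] [Module S M] : Prop :=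
  ∀ (A B : Type u) [AddCommGroup A] [Module S A] [AddCommGroup B] [Module S B]
    (i : A →ₗ[S] B), IsPureMono S i → ∀ f : A →ₗ[S] M, ∃ h : B →ₗ[S] M, h ∘ₗ i = f

/-- `M` is indigent: its subinjectivity domain is exactly the injective modules. -/
def Indigent (M : Type u) [AddCommGroup M] [Module S M] : Prop :=
  ∀ (N : Type u) [AddCommGroup N] [Module S N], Subinjective S N M ↔ InjMod S N

/-- `M` is pi-indigent: `M` is pure-injective and its subinjectivity domain is exactly
the absolutely pure modules. -/
def PiIndigent (M : Type u) [AddCommGroup M] [Module S M] : Prop :=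
  PureInjective S M ∧
    ∀ (N : Type u) [AddCommGroup N] [Module S N], Subinjective S N M ↔ AbsPure S N

/-- Flatness via the equational criterion. -/
def FlatMod (M : Type u) [AddCommGroup M] [Module S M] : Prop :=
  ∀ (n : ℕ) (r : Fin n → S) (x : Fin n → M), (∑ i, r i • x i) = 0 →
    ∃ (m : ℕ) (a : Fin n → Fin m → S) (y : Fin m → M),
      (∀ i, x i = ∑ j, a i j • y j) ∧ ∀ j, (∑ i, r i * a i j) = 0

/-- Finitely presented module. -/
def FPMod (M : Type u) [AddCommGroup M] [Module S M] : Prop :=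
  ∃ (n : ℕ) (K : Submodule S (Fin n → S)), K.FG ∧
    Nonempty ((((Fin n → S)) ⧸ K) ≃ₗ[S] M)

/-- `Ext¹_S(M, N) = 0`, expressed by the splitting of every extension of `N` by `M`. -/
def ExtVanish (M N : Type u) [AddCommGroup M] [Module S M] [AddCommGroup N] [Module S N] :
    Prop :=
  ∀ (B : Type u) [AddCommGroup B] [Module S B] (i : N →ₗ[S] B) (p : B →ₗ[S] M),
    Function.Injective i → Function.Surjective p → LinearMap.range i = LinearMap.ker p →
      ∃ s : M →ₗ[S] B, p ∘ₗ s = LinearMap.id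

/-- `Tor₁^S(N, T) = 0` for a right module `N` and a left module `T`. -/
def TorVanish (N : Type u) [AddCommGroup N] [Module Sᵐᵒᵖ N] (T : Type u) [AddCommGroup T]
    [Module S T] : Prop :=
  ∀ (P K : Type u) [AddCommGroup P] [Module Sᵐᵒᵖ P] [AddCommGroup K] [Module Sᵐᵒᵖ K]
    (i : K →ₗ[Sᵐᵒᵖ] P) (p : P →ₗ[Sᵐᵒᵖ] N), Module.Projective Sᵐᵒᵖ P →
      Function.Injective i → Function.Surjective p →
        LinearMap.range i = LinearMap.ker p → Function.Injective (lTensorMap S i T)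

/-- `M` is a Whitehead test module for injectivity (i-test). -/
def ITest (M : Type u) [AddCommGroup M] [Module S M] : Prop :=
  ∀ (N : Type u) [AddCommGroup N] [Module S N], ExtVanish S M N → InjMod S N

/-- `S` is (left) n-saturated: `S` is not semisimple and every finitely generated
non-projective module is i-test. -/
def NSaturated : Prop :=
  ¬ IsSemisimpleRing S ∧ ∀ (M : Type u) [AddCommGroup M] [Module S M],
    Module.Finite S M → ¬ Module.Projective S M → ITest S M

/-- A submodule is essential if it intersects every nonzero submodule nontrivially. -/
def EssentialIn {M : Type u} [AddCommGroup M] [Module S M] (A : Submodule S M) : Prop :=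
  ∀ B : Submodule S M, B ≠ ⊥ → A ⊓ B ≠ ⊥

/-- `M` is a singular module: every element is annihilated by an essential left ideal. -/
def SingularMod (M : Type u) [AddCommGroup M] [Module S M] : Prop :=
  ∀ x : M, EssentialIn S (LinearMap.ker (LinearMap.toSpanSingleton S M x))

/-- `S` is (left) nonsingular: `Z(S) = 0`. -/
def NonsingularRing : Prop :=
  ∀ r : S, EssentialIn S (LinearMap.ker (LinearMap.toSpanSingleton S S r)) → r = 0

/-- The socle of a module: the supremum of its simple submodules. -/
def socle (M : Type u) [AddCommGroup M] [Module S M] : Submodule S M :=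
  sSup {N : Submodule S M | IsAtom N}

/-- von Neumann regular ring. -/
def IsVNR : Prop := ∀ a : S, ∃ r : S, a * r * a = a

/-- (left) V-ring: every simple module is injective. -/
def VRing : Prop :=
  ∀ (M : Type u) [AddCommGroup M] [Module S M], IsSimpleModule S M → InjMod S M

/-- (left) hereditary: every left ideal is projective. -/
def HereditaryRing : Prop := ∀ I : Submodule S S, Module.Projective S I

/-- (left) semihereditary: every finitely generated left ideal is projective. -/
def SemihereditaryRing : Prop := ∀ I : Submodule S S, I.FG → Module.Projective S I

/-- (left) SI-ring: every singular module is injective. -/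
def SIRing : Prop :=
  ∀ (M : Type u) [AddCommGroup M] [Module S M], SingularMod S M → InjMod S M

/-- quasi-Frobenius ring: two-sided Noetherian and self-injective. -/
def QFRing : Prop :=
  IsNoetherianRing S ∧ IsNoetherianRing Sᵐᵒᵖ ∧ InjMod S S ∧ InjMod Sᵐᵒᵖ S

/-- A module is uniserial if its submodules are totally ordered. -/
def Uniserial (M : Type u) [AddCommGroup M] [Module S M] : Prop :=
  ∀ A B : Submodule S M, A ≤ B ∨ B ≤ A

/-- (left) serial ring: `S` is a finite direct sum of uniserial left ideals. -/
def SerialRing : Prop :=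
  ∃ (n : ℕ) (f : Fin n → Submodule S S), (∀ i, Uniserial S (f i)) ∧
    iSupIndep f ∧ iSup f = ⊤

/-- (left) coherent: every finitely generated left ideal is finitely presented. -/
def CoherentRing : Prop := ∀ I : Submodule S S, I.FG → FPMod S I

/-- Indecomposable ring: no nontrivial central idempotents. -/
def IndecompRing : Prop :=
  Nontrivial S ∧ ∀ e : S, e * e = e → (∀ r : S, e * r = r * e) → e = 0 ∨ e = 1

end Defs
/-! Auxiliary lemmas for the proof of Statement 8 -/

section ProofAux

variable {R : Type u} [Ring R]

private lemma charmod_smul_apply {M : Type u} [AddCommGroup M] [Module Rᵐᵒᵖ M]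
    (r : R) (f : CharMod M) (m : M) : (r • f) m = f (op r • m) := rfl

/-- Extension of characters along injective additive maps. -/
private lemma char_extend {A B : Type u} [AddCommGroup A] [AddCommGroup B] (f : A →+ B)
    (hf : Function.Injective f) (χ : A →+ AddCircle (1 : ℚ)) :
    ∃ χ' : B →+ AddCircle (1 : ℚ), ∀ a, χ' (f a) = χ a := by
  obtain ⟨χ', hχ'⟩ := CharacterModule.dual_surjective_of_injective f.toIntLinearMap hf χ
  exact ⟨χ', fun a => DFunLike.congr_fun hχ' a⟩

/-- `CharMod I` is `R`-subinjective for every right ideal `I`. -/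
private lemma subinj_R_char (I : Submodule Rᵐᵒᵖ R) : Subinjective R R (CharMod I) := by
  intro K _ _ i hi f
  classical
  -- the multiplication map `μ : I ⊗ K → K`
  let bil : ↥I →ₗ[ℤ] K →ₗ[ℤ] K :=
    AddMonoidHom.toIntLinearMap
      { toFun := fun x => AddMonoidHom.toIntLinearMap (DistribMulAction.toAddMonoidHom K (x : R))
        map_zero' := by ext k; simp
        map_add' := by intro a b; ext k; simp [add_smul] }
  have hle : tensorRel R (↥I) K ≤ LinearMap.ker (TensorProduct.lift bil) := by
    unfold tensorRel
    apply Submodule.span_le.mpr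
    rintro _ ⟨m, rr, nn, rfl⟩
    show TensorProduct.lift bil ((op rr • m) ⊗ₜ[ℤ] nn - m ⊗ₜ[ℤ] (rr • nn)) = 0
    rw [map_sub, TensorProduct.lift.tmul, TensorProduct.lift.tmul]
    have hco : ((op rr • m : ↥I) : R) = (m : R) * rr := rfl
    show ((op rr • m : ↥I) : R) • nn - (m : R) • (rr • nn) = 0
    rw [hco, mul_smul, sub_self]
  let μ : RTensor R (↥I) K →ₗ[ℤ] K := Submodule.liftQ _ (TensorProduct.lift bil) hle
  -- the map `ι : I → I ⊗ K`, `x ↦ x ⊗ i 1`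
  let ι : ↥I →+ RTensor R (↥I) K :=
    { toFun := fun x => Submodule.Quotient.mk (x ⊗ₜ[ℤ] i 1)
      map_zero' := by
        show Submodule.Quotient.mk ((0 : ↥I) ⊗ₜ[ℤ] i 1) = 0
        rw [TensorProduct.zero_tmul]; rfl
      map_add' := by
        intro a b
        show Submodule.Quotient.mk ((a + b) ⊗ₜ[ℤ] i 1) = _
        rw [TensorProduct.add_tmul]; rfl }
  have hμι : ∀ x : ↥I, μ (ι x) = i (x : R) := by
    intro x
    show μ (Submodule.Quotient.mk (x ⊗ₜ[ℤ] i 1)) = _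
    have h0 : μ (Submodule.Quotient.mk (x ⊗ₜ[ℤ] i 1)) = (x : R) • i 1 := rfl
    rw [h0, ← map_smul, smul_eq_mul, mul_one]
  have hιinj : Function.Injective ι := by
    intro a b hab
    have : i (a : R) = i (b : R) := by rw [← hμι, ← hμι, hab]
    exact Subtype.ext (hi this)
  obtain ⟨χ, hχ⟩ := char_extend ι hιinj (f 1)
  let T : K → CharMod ↥I := fun k =>
    { toFun := fun x => χ (Submodule.Quotient.mk (x ⊗ₜ[ℤ] k))
      map_zero' := by
        show χ (Submodule.Quotient.mk ((0 : ↥I) ⊗ₜ[ℤ] k)) = 0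
        rw [TensorProduct.zero_tmul]
        show χ 0 = 0
        exact map_zero χ
      map_add' := by
        intro a b
        show χ (Submodule.Quotient.mk ((a + b) ⊗ₜ[ℤ] k)) = _
        rw [TensorProduct.add_tmul]
        show χ (Submodule.Quotient.mk _ + Submodule.Quotient.mk _) = _
        exact map_add χ _ _ }
  have hT : ∀ (k : K) (x : ↥I), T k x = χ (Submodule.Quotient.mk (x ⊗ₜ[ℤ] k)) := fun _ _ => rfl
  refine ⟨{ toFun := T, map_add' := ?_, map_smul' := ?_ }, ?_⟩
  · intro k₁ k₂
    ext x
    show T (k₁ + k₂) x = T k₁ x + T k₂ x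
    rw [hT, hT, hT, TensorProduct.tmul_add]
    have h0 : (Submodule.Quotient.mk (x ⊗ₜ[ℤ] k₁ + x ⊗ₜ[ℤ] k₂) : RTensor R (↥I) K)
        = Submodule.Quotient.mk (x ⊗ₜ[ℤ] k₁) + Submodule.Quotient.mk (x ⊗ₜ[ℤ] k₂) := rfl
    rw [h0]
    exact map_add χ _ _
  · intro rr k
    ext x
    show T (rr • k) x = T k (op rr • x)
    rw [hT, hT]
    congr 1
    refine (Submodule.Quotient.eq (p := tensorRel R (↥I) K)).mpr ?_
    have hmem : ((op rr • x) ⊗ₜ[ℤ] k - x ⊗ₜ[ℤ] (rr • k)) ∈ tensorRel R (↥I) K :=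
      Submodule.subset_span ⟨x, rr, k, rfl⟩
    simpa [neg_sub] using Submodule.neg_mem _ hmem
  · apply LinearMap.ext_ring
    ext x
    show χ (Submodule.Quotient.mk (x ⊗ₜ[ℤ] i 1)) = (f 1) x
    exact hχ x

/-- The equational criterion for flatness follows from injectivity of the character module. -/
private lemma flat_of_injChar (M : Type u) [AddCommGroup M] [Module Rᵐᵒᵖ M]
    (hinj : InjMod R (CharMod M)) : FlatMod Rᵐᵒᵖ M := by
  intro n r x hx
  classical
  let σ : (Fin n → R) →ₗ[R] R :=
    { toFun := fun s => ∑ i, s i * unop (r i)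
      map_add' := by intro s t; simp [add_mul, Finset.sum_add_distrib]
      map_smul' := by intro t s; simp [Finset.mul_sum, mul_assoc] }
  let S : Set (Fin n → M) :=
    {w | ∃ (y : M) (s : Fin n → R), σ s = 0 ∧ w = fun i => op (s i) • y}
  let W : AddSubgroup (Fin n → M) := AddSubgroup.closure S
  -- step 1 : x ∈ W
  have hxW : x ∈ W := by
    by_contra hx'
    have hx0 : (QuotientAddGroup.mk' W x) ≠ 0 := by
      intro h0
      exact hx' ((QuotientAddGroup.eq_zero_iff x).mp h0)
    obtain ⟨c, hc⟩ := CharacterModule.exists_character_apply_ne_zero_of_ne_zero hx0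
    let Φ : (Fin n → M) →+ AddCircle (1 : ℚ) :=
      AddMonoidHom.comp (c : ((Fin n → M) ⧸ W) →+ AddCircle (1 : ℚ)) (QuotientAddGroup.mk' W)
    have hΦS : ∀ w ∈ S, Φ w = 0 := by
      intro w hw
      have h0 : QuotientAddGroup.mk' W w = 0 :=
        (QuotientAddGroup.eq_zero_iff w).mpr (AddSubgroup.subset_closure hw)
      show c (QuotientAddGroup.mk' W w) = 0
      rw [h0, map_zero]
    let φ : Fin n → CharMod M := fun i => Φ.comp (AddMonoidHom.single (fun _ => M) i)
    have hΦ : ∀ z : Fin n → M, Φ z = ∑ i, φ i (z i) := by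
      intro z
      conv_lhs => rw [← Finset.univ_sum_single z]
      rw [map_sum]
      rfl
    let G : (Fin n → R) →ₗ[R] CharMod M :=
      { toFun := fun s => ∑ i, s i • φ i
        map_add' := by intro s t; simp [add_smul, Finset.sum_add_distrib]
        map_smul' := by intro t s; simp [mul_smul, Finset.smul_sum] }
    have hkerG : LinearMap.ker σ ≤ LinearMap.ker G := by
      intro s hs
      rw [LinearMap.mem_ker] at hs ⊢
      ext m
      have h1 : (G s) m = ∑ i, φ i (op (s i) • m) := by
        show (∑ i, s i • φ i) m = _
        rw [AddMonoidHom.finset_sum_apply]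
        rfl
      have h2 := hΦ (fun i => op (s i) • m)
      rw [h1, ← h2]
      exact hΦS _ ⟨m, s, hs, rfl⟩
    let Gq := Submodule.liftQ (LinearMap.ker σ) G hkerG
    let e := σ.quotKerEquivRange
    let gbar : ↥(LinearMap.range σ) →ₗ[R] CharMod M := Gq.comp e.symm.toLinearMap
    obtain ⟨H, hH⟩ := hinj (↥(LinearMap.range σ)) R (LinearMap.range σ).subtype
      (Submodule.injective_subtype _) gbar
    have hkey : ∀ i : Fin n, φ i = H (unop (r i)) := by
      intro i
      have hσ : σ (Pi.single i 1) = unop (r i) := by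
        simp [σ, Pi.single_apply, ite_mul, Finset.sum_ite_eq']
      have hmem : unop (r i) ∈ LinearMap.range σ := ⟨Pi.single i 1, hσ⟩
      have h3 : H (unop (r i)) = gbar ⟨unop (r i), hmem⟩ := by
        have h4 := DFunLike.congr_fun hH (⟨unop (r i), hmem⟩ : ↥(LinearMap.range σ))
        exact h4
      have h4 : (⟨unop (r i), hmem⟩ : ↥(LinearMap.range σ))
          = ⟨σ (Pi.single i 1), LinearMap.mem_range_self σ _⟩ := Subtype.ext hσ.symm
      have h5 : gbar ⟨σ (Pi.single i 1), LinearMap.mem_range_self σ _⟩ = G (Pi.single i 1) := by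
        show Gq (e.symm ⟨σ (Pi.single i 1), _⟩) = G (Pi.single i 1)
        rw [LinearMap.quotKerEquivRange_symm_apply_image, Submodule.mkQ_apply,
          Submodule.liftQ_apply]
      have h6 : G (Pi.single i 1) = φ i := by
        simp [G, Pi.single_apply, ite_smul, Finset.sum_ite_eq']
      rw [h3, h4, h5, h6]
    have hfinal : Φ x = 0 := by
      rw [hΦ x]
      have h7 : ∀ i, φ i (x i) = H 1 (r i • x i) := by
        intro i
        rw [hkey i]
        have h8 : H (unop (r i)) = unop (r i) • H 1 := by
          rw [← map_smul, smul_eq_mul, mul_one]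
        rw [h8, charmod_smul_apply, op_unop]
      calc ∑ i, φ i (x i) = ∑ i, H 1 (r i • x i) := Finset.sum_congr rfl fun i _ => h7 i
        _ = H 1 (∑ i, r i • x i) := (map_sum (H 1) _ _).symm
        _ = 0 := by rw [hx, map_zero]
    exact hc hfinal
  -- step 2 : extract a finite representation from membership in `W`
  refine AddSubgroup.closure_induction
    (p := fun z _ => ∃ (m : ℕ) (a : Fin n → Fin m → Rᵐᵒᵖ) (y : Fin m → M),
      (∀ i, z i = ∑ j, a i j • y j) ∧ ∀ j, (∑ i, r i * a i j) = 0)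
    ?_ ?_ ?_ ?_ hxW
  · rintro w ⟨y, s, hs, rfl⟩
    refine ⟨1, fun i _ => op (s i), fun _ => y, fun i => ?_, fun j => ?_⟩
    · simp
    · have h9 : ∀ i, r i * op (s i) = op (s i * unop (r i)) := by
        intro i; rw [MulOpposite.op_mul, MulOpposite.op_unop]
      have hs' : ∑ i, s i * unop (r i) = 0 := hs
      rw [Finset.sum_congr rfl fun i _ => h9 i, ← Finset.op_sum, hs', MulOpposite.op_zero]
  · exact ⟨0, fun _ => Fin.elim0, Fin.elim0, fun i => by simp, fun j => j.elim0⟩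
  · rintro z₁ z₂ _ _ ⟨m₁, a₁, y₁, h₁, h₁'⟩ ⟨m₂, a₂, y₂, h₂, h₂'⟩
    refine ⟨m₁ + m₂, fun i => Fin.append (a₁ i) (a₂ i), Fin.append y₁ y₂,
      fun i => ?_, fun j => ?_⟩
    · show z₁ i + z₂ i = _
      rw [Fin.sum_univ_add]
      simp only [Fin.append_left, Fin.append_right]
      rw [h₁ i, h₂ i]
    · refine Fin.addCases
        (motive := fun j => ∑ i, r i * Fin.append (a₁ i) (a₂ i) j = 0) ?_ ?_ j
      · intro j; simp only [Fin.append_left]; exact h₁' j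
      · intro j; simp only [Fin.append_right]; exact h₂' j
  · rintro z _ ⟨m, a, y, hy, hy'⟩
    refine ⟨m, a, fun j => -(y j), fun i => ?_, hy'⟩
    show -(z i) = _
    rw [hy i]
    simp [smul_neg]

end ProofAux

theorem stmt_8 {R : Type u} [Ring R] (hreg : ¬ IsVNR R)
    (h : ∀ I : Submodule Rᵐᵒᵖ R, I.FG →
      InjMod R (CharMod I) ∨ PiIndigent R (CharMod I)) :
    AbsPure R R ∨ ∀ I : Submodule Rᵐᵒᵖ R, FlatMod Rᵐᵒᵖ I := by
  classical
  by_cases hA : AbsPure R R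
  · exact Or.inl hA
  · refine Or.inr fun I => ?_
    intro n r x hx
    let I₀ : Submodule Rᵐᵒᵖ R := Submodule.span Rᵐᵒᵖ (Set.range fun i => (x i : R))
    have hfg : I₀.FG := by
      refine ⟨Finset.univ.image fun i => (x i : R), ?_⟩
      simp [I₀, Finset.coe_image, Set.image_univ]
    have hIle : I₀ ≤ I := Submodule.span_le.mpr (by rintro _ ⟨i, rfl⟩; exact (x i).2)
    have hinj : InjMod R (CharMod (↥I₀)) := by
      rcases h I₀ hfg with h1 | h2
      · exact h1
      · exact absurd ((h2.2 R).mp (subinj_R_char I₀)) hA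
    let x₀ : Fin n → ↥I₀ := fun i => ⟨(x i : R), Submodule.subset_span ⟨i, rfl⟩⟩
    have hx₀ : ∑ i, r i • x₀ i = 0 := by
      apply Subtype.ext
      have hv : ((∑ i, r i • x i : ↥I) : R) = 0 := by rw [hx]; rfl
      push_cast at hv ⊢
      simpa using hv
    obtain ⟨m, a, y₀, hy1, hy2⟩ := flat_of_injChar (↥I₀) hinj n r x₀ hx₀
    refine ⟨m, a, fun j => ⟨(y₀ j : R), hIle (y₀ j).2⟩, fun i => ?_, hy2⟩
    apply Subtype.ext
    have := congrArg Subtype.val (hy1 i)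
    push_cast at this ⊢
    simpa using this
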